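/- Let n ≥ 1 and let P be an n×n real matrix with nonnegative entries whose every row sums to 1. Set ε = max_{j=1,…,n} min_{i=1,…,n} P_{ij}. Then for every vector y ∈ ℝ^n, max_i (Py)_i − min_i (Py)_i ≤ (1 − ε) (max_i y_i − min_i y_i); that is, a row-stochastic matrix contracts the spread of a vector by the factor (1 − ε). -/
import Mathlib


open Filter Finset

/-- A row-stochastic matrix contracts the spread of a vector by the factor
`1 − ε`, where `ε = max_j min_i P_{ij}`. -/
theorem row_stochastic_spread_contraction
    (n : ℕ) (hn : 1 ≤ n) (P : Matrix (Fin n) (Fin n) ℝ)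
    (hP_nonneg : ∀ i j, 0 ≤ P i j)
    (hP_row : ∀ i, ∑ j, P i j = 1)
    (y : Fin n → ℝ) :
    (⨆ i, P.mulVec y i) - (⨅ i, P.mulVec y i) ≤
      (1 - ⨆ j, ⨅ i, P i j) * ((⨆ i, y i) - (⨅ i, y i)) := by
  haveI : Nonempty (Fin n) := ⟨⟨0, hn⟩⟩
  set M := ⨆ i, y i with hM
  set m := ⨅ i, y i with hm
  have hyM : ∀ j, y j ≤ M := fun j => le_ciSup (Finite.bddAbove_range y) j
  have hym : ∀ j, m ≤ y j := fun j => ciInf_le (Finite.bddBelow_range y) j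
  have hMm : 0 ≤ M - m := by
    have := (hym (Classical.arbitrary (Fin n))).trans (hyM _)
    linarith
  -- infimum of each column is nonneg and below each entry
  have hinf_le : ∀ i j, (⨅ i', P i' j) ≤ P i j :=
    fun i j => ciInf_le (Finite.bddBelow_range _) i
  have hinf_nonneg : ∀ j, 0 ≤ ⨅ i', P i' j :=
    fun j => le_ciInf fun i => hP_nonneg i j
  obtain ⟨i, hi⟩ := exists_eq_ciSup_of_finite (f := P.mulVec y)
  obtain ⟨k, hk⟩ := exists_eq_ciInf_of_finite (f := P.mulVec y)
  rw [← hi, ← hk]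
  set g : Fin n → ℝ := fun j => min (P i j) (P k j) with hg
  have hginf : ∀ j, (⨅ i', P i' j) ≤ g j :=
    fun j => le_min (hinf_le i j) (hinf_le k j)
  have heps : (⨆ j, ⨅ i', P i' j) ≤ ∑ j, g j := by
    obtain ⟨j0, hj0⟩ := exists_eq_ciSup_of_finite (f := fun j => ⨅ i', P i' j)
    rw [← hj0]
    calc (⨅ i', P i' j0) ≤ ∑ j, ⨅ i', P i' j :=
          Finset.single_le_sum (fun j _ => hinf_nonneg j) (Finset.mem_univ j0)
      _ ≤ ∑ j, g j := Finset.sum_le_sum fun j _ => hginf j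
  have hgsum_le_i : ∑ j, g j ≤ 1 := by
    rw [← hP_row i]; exact Finset.sum_le_sum fun j _ => min_le_left _ _
  have h1 : P.mulVec y i - P.mulVec y k
      = ∑ j, (P i j - g j) * y j - ∑ j, (P k j - g j) * y j := by
    simp only [Matrix.mulVec, dotProduct]
    rw [← Finset.sum_sub_distrib, ← Finset.sum_sub_distrib]
    exact Finset.sum_congr rfl fun j _ => by ring
  have h2 : ∑ j, (P i j - g j) * y j ≤ (1 - ∑ j, g j) * M := by
    have : ∑ j, (P i j - g j) * y j ≤ ∑ j, (P i j - g j) * M :=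
      Finset.sum_le_sum fun j _ => by
        have hpos : 0 ≤ P i j - g j := sub_nonneg.2 (min_le_left _ _)
        exact mul_le_mul_of_nonneg_left (hyM j) hpos
    calc ∑ j, (P i j - g j) * y j ≤ ∑ j, (P i j - g j) * M := this
      _ = (1 - ∑ j, g j) * M := by
          rw [← Finset.sum_mul, Finset.sum_sub_distrib, hP_row i]
  have h3 : (1 - ∑ j, g j) * m ≤ ∑ j, (P k j - g j) * y j := by
    have : ∑ j, (P k j - g j) * m ≤ ∑ j, (P k j - g j) * y j :=
      Finset.sum_le_sum fun j _ => by
        have hpos : 0 ≤ P k j - g j := sub_nonneg.2 (min_le_right _ _)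
        exact mul_le_mul_of_nonneg_left (hym j) hpos
    calc (1 - ∑ j, g j) * m = ∑ j, (P k j - g j) * m := by
          rw [← Finset.sum_mul, Finset.sum_sub_distrib, hP_row k]
      _ ≤ _ := this
  have h4 : P.mulVec y i - P.mulVec y k ≤ (1 - ∑ j, g j) * (M - m) := by
    rw [h1]; nlinarith
  calc P.mulVec y i - P.mulVec y k ≤ (1 - ∑ j, g j) * (M - m) := h4
    _ ≤ (1 - ⨆ j, ⨅ i', P i' j) * (M - m) := by nlinarith
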